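/- arXiv:1203.0957 — 2 statements merged into one kernel-verified Lean document; each statement's English description precedes it below -/
import Mathlib

section
/- Let A be a bialgebra over a field k and η : A ⊗ A → k a Hochschild 2-cocycle such that η(id ⊗ m) commutes with ε ⊗ η and η(m ⊗ id) commutes with η ⊗ ε in the convolution algebra Hom(A⊗A⊗A, k), and such that σ = e^η is a well-defined convolution-invertible map. Then σ = e^η satisfies the multiplicative 2-cocycle condition (ε ⊗ σ) * σ(id ⊗ m) = (σ ⊗ ε) * σ(m ⊗ id). -/
open TensorProduct

noncomputable section Stmt5

universe u

variable {k : Type u} [Field k]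

/-- The convolution product on linear functionals on a coalgebra `C`:
`(f * g)(x) = f(x₁) g(x₂)` in Sweedler notation. -/
def conv {C : Type u} [AddCommGroup C] [Module k C]
    [Coalgebra k C] (f g : C →ₗ[k] k) : C →ₗ[k] k :=
  LinearMap.mul' k k ∘ₗ TensorProduct.map f g ∘ₗ Coalgebra.comul

/-- Convolution powers `η^{*i}`, with `η^{*0} = ε` (the unit of the convolution algebra). -/
def convPow {C : Type u} [AddCommGroup C] [Module k C] [Coalgebra k C]
    (η : C →ₗ[k] k) : ℕ → (C →ₗ[k] k)
  | 0 => Coalgebra.counit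
  | (n + 1) => conv η (convPow η n)

section ConvAux
open Coalgebra
variable {C : Type u} [AddCommGroup C] [Module k C] [Coalgebra k C]

lemma conv_repr {ι : Type*} (f g : C →ₗ[k] k) {a : C} (r : Coalgebra.Repr k a ι) :
    conv f g a = ∑ i ∈ r.index, f (r.left i) * g (r.right i) := by
  simp only [conv, LinearMap.comp_apply, ← r.eq, map_sum, TensorProduct.map_tmul,
    LinearMap.mul'_apply]

lemma conv_counit_left (f : C →ₗ[k] k) : conv Coalgebra.counit f = f := by
  ext a
  rw [conv_repr _ _ (ℛ k a)]
  have h := Coalgebra.sum_counit_tmul_map_eq (R := k) f a (repr := ℛ k a)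
  have h2 := congrArg (TensorProduct.lid k k) h
  simp only [map_sum, TensorProduct.lid_tmul, smul_eq_mul, one_mul, mul_one] at h2
  exact h2

lemma conv_counit_right (f : C →ₗ[k] k) : conv f Coalgebra.counit = f := by
  ext a
  rw [conv_repr _ _ (ℛ k a)]
  have h := Coalgebra.sum_map_tmul_counit_eq (R := k) f a (repr := ℛ k a)
  have h2 := congrArg (TensorProduct.lid k k) h
  simp only [map_sum, TensorProduct.lid_tmul, smul_eq_mul, one_mul, mul_one] at h2
  exact h2

lemma conv_assoc (f g h : C →ₗ[k] k) : conv (conv f g) h = conv f (conv g h) := by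
  ext a
  set r := ℛ k a
  set r₁ : ∀ i : C × C, Coalgebra.Repr k (r.left i) (C × C) := fun i => ℛ k (r.left i)
  set r₂ : ∀ i : C × C, Coalgebra.Repr k (r.right i) (C × C) := fun i => ℛ k (r.right i)
  have key := Coalgebra.sum_map_tmul_tmul_eq (R := k) f g h a (repr := r) (a₁ := r₁) (a₂ := r₂)
  have key2 := congrArg (LinearMap.mul' k k ∘ₗ (LinearMap.mul' k k).lTensor k) key
  simp only [map_sum, LinearMap.comp_apply, LinearMap.lTensor_tmul, LinearMap.mul'_apply] at key2
  rw [conv_repr (conv f g) h r, conv_repr f (conv g h) r]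
  calc ∑ i ∈ r.index, conv f g (r.left i) * h (r.right i)
      = ∑ i ∈ r.index, ∑ j ∈ (r₁ i).index,
          f ((r₁ i).left j) * ((g ((r₁ i).right j)) * h (r.right i)) := by
        refine Finset.sum_congr rfl fun i _ => ?_
        rw [conv_repr f g (r₁ i), Finset.sum_mul]
        exact Finset.sum_congr rfl fun j _ => by ring
    _ = ∑ i ∈ r.index, ∑ j ∈ (r₂ i).index,
          f (r.left i) * (g ((r₂ i).left j) * h ((r₂ i).right j)) := key2.symm
    _ = ∑ i ∈ r.index, f (r.left i) * conv g h (r.right i) := by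
        refine Finset.sum_congr rfl fun i _ => ?_
        rw [conv_repr g h (r₂ i), Finset.mul_sum]

lemma conv_add_left (f f' g : C →ₗ[k] k) : conv (f + f') g = conv f g + conv f' g := by
  simp only [conv, TensorProduct.map_add_left, LinearMap.add_comp, LinearMap.comp_add]

lemma conv_add_right (f g g' : C →ₗ[k] k) : conv f (g + g') = conv f g + conv f g' := by
  simp only [conv, TensorProduct.map_add_right, LinearMap.add_comp, LinearMap.comp_add]

lemma conv_smul_left (c : k) (f g : C →ₗ[k] k) : conv (c • f) g = c • conv f g := by
  simp only [conv, TensorProduct.map_smul_left, LinearMap.smul_comp, LinearMap.comp_smul]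

lemma conv_smul_right (c : k) (f g : C →ₗ[k] k) : conv f (c • g) = c • conv f g := by
  simp only [conv, TensorProduct.map_smul_right, LinearMap.smul_comp, LinearMap.comp_smul]

/-- The convolution ring structure on linear functionals on a coalgebra. -/
noncomputable instance convRing : Ring (C →ₗ[k] k) :=
  { (inferInstance : AddCommGroup (C →ₗ[k] k)) with
    mul := fun f g => conv f g
    one := Coalgebra.counit
    mul_assoc := fun f g h => conv_assoc f g h
    one_mul := fun f => conv_counit_left f
    mul_one := fun f => conv_counit_right f
    left_distrib := fun f g h => conv_add_right f g h
    right_distrib := fun f g h => conv_add_left f g h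
    zero_mul := fun f => by
      show conv 0 f = 0
      have := conv_smul_left (0 : k) 0 f
      simpa using this
    mul_zero := fun f => by
      show conv f 0 = 0
      have := conv_smul_right (0 : k) f 0
      simpa using this }

lemma conv_eq_mul (f g : C →ₗ[k] k) : conv f g = f * g := rfl

lemma counit_eq_one : (Coalgebra.counit : C →ₗ[k] k) = 1 := rfl

instance : SMulCommClass k (C →ₗ[k] k) (C →ₗ[k] k) :=
  ⟨fun c f g => (conv_smul_right c f g).symm⟩

instance : IsScalarTower k (C →ₗ[k] k) (C →ₗ[k] k) :=
  ⟨fun c f g => by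
    show conv (c • f) g = c • conv f g
    exact conv_smul_left c f g⟩

lemma convPow_eq_pow (f : C →ₗ[k] k) (n : ℕ) : convPow f n = f ^ n := by
  induction n with
  | zero => rfl
  | succ m ih => rw [convPow, ih, pow_succ']; rfl

variable {D : Type u} [AddCommGroup D] [Module k D] [Coalgebra k D]

lemma conv_pull (φ : C →ₗc[k] D) (f g : D →ₗ[k] k) :
    conv (f ∘ₗ (φ : C →ₗ[k] D)) (g ∘ₗ (φ : C →ₗ[k] D)) = conv f g ∘ₗ (φ : C →ₗ[k] D) := by
  simp only [conv]
  rw [TensorProduct.map_comp]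
  simp only [LinearMap.comp_assoc]
  rw [CoalgHomClass.map_comp_comul φ]

lemma convPow_pull (φ : C →ₗc[k] D) (f : D →ₗ[k] k) (n : ℕ) :
    convPow (f ∘ₗ (φ : C →ₗ[k] D)) n = convPow f n ∘ₗ (φ : C →ₗ[k] D) := by
  induction n with
  | zero => exact φ.counit_comp.symm
  | succ m ih => rw [convPow, ih, conv_pull, convPow]

lemma exp_pull (φ : C →ₗc[k] D) (η : D →ₗ[k] k) (N : ℕ) :
    (∑ i ∈ Finset.range N, ((Nat.factorial i : k))⁻¹ • convPow η i) ∘ₗ (φ : C →ₗ[k] D) =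
      ∑ i ∈ Finset.range N, ((Nat.factorial i : k))⁻¹ • (η ∘ₗ (φ : C →ₗ[k] D)) ^ i := by
  ext x
  simp only [LinearMap.coe_comp, Function.comp_apply, LinearMap.coe_sum, Finset.sum_apply,
    LinearMap.smul_apply]
  refine Finset.sum_congr rfl fun i _ => ?_
  rw [← convPow_eq_pow, convPow_pull]
  rfl

end ConvAux

open Finset in
theorem expMulAux [CharZero k] {R : Type u} [Ring R] [Module k R]
    [IsScalarTower k R R] [SMulCommClass k R R]
    (a b : R) (hc : Commute a b) (N : ℕ) (ha : a ^ N = 0) (hb : b ^ N = 0) :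
    (∑ i ∈ range N, ((Nat.factorial i : k))⁻¹ • a ^ i) *
      (∑ j ∈ range N, ((Nat.factorial j : k))⁻¹ • b ^ j) =
    ∑ n ∈ range (2 * N), ((Nat.factorial n : k))⁻¹ • (a + b) ^ n := by
  set g : ℕ → ℕ → R := fun i j =>
    (((Nat.factorial i : k))⁻¹ * ((Nat.factorial j : k))⁻¹) • (a ^ i * b ^ j) with hg
  have hgz : ∀ i j, N ≤ i ∨ N ≤ j → g i j = 0 := by
    intro i j h
    rcases h with h | h
    · have : a ^ i = 0 := by
        rw [← Nat.sub_add_cancel h, pow_add, ha, mul_zero]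
      simp [hg, this]
    · have : b ^ j = 0 := by
        rw [← Nat.sub_add_cancel h, pow_add, hb, mul_zero]
      simp [hg, this]
  have lhs_eq : (∑ i ∈ range N, ((Nat.factorial i : k))⁻¹ • a ^ i) *
      (∑ j ∈ range N, ((Nat.factorial j : k))⁻¹ • b ^ j) =
      ∑ p ∈ range N ×ˢ range N, g p.1 p.2 := by
    rw [Finset.sum_mul_sum]
    rw [Finset.sum_product]
    refine Finset.sum_congr rfl fun i _ => Finset.sum_congr rfl fun j _ => ?_
    rw [hg]
    rw [smul_mul_assoc, mul_smul_comm, smul_smul]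
  have rhs_eq : ∑ n ∈ range (2 * N), ((Nat.factorial n : k))⁻¹ • (a + b) ^ n =
      ∑ x ∈ (range (2 * N)).sigma (fun n => range (n + 1)), g x.2 (x.1 - x.2) := by
    rw [Finset.sum_sigma]
    refine Finset.sum_congr rfl fun n _ => ?_
    rw [hc.add_pow, Finset.smul_sum]
    refine Finset.sum_congr rfl fun m hm => ?_
    have hmn : m ≤ n := Nat.lt_succ_iff.mp (Finset.mem_range.mp hm)
    have hcast : ((n.choose m : ℕ) : k) =
        (Nat.factorial n : k) / ((Nat.factorial m : k) * (Nat.factorial (n - m) : k)) :=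
      Nat.cast_choose k hmn
    have h1 : a ^ m * b ^ (n - m) * (n.choose m : R) =
        ((n.choose m : ℕ) : k) • (a ^ m * b ^ (n - m)) := by
      rw [(Nat.cast_commute (n.choose m) (a ^ m * b ^ (n - m))).eq.symm]
      rw [← nsmul_eq_mul, ← Nat.cast_smul_eq_nsmul k]
    rw [h1, smul_smul, hg]
    congr 1
    rw [hcast]
    have h2 : (Nat.factorial n : k) ≠ 0 := Nat.cast_ne_zero.mpr n.factorial_ne_zero
    field_simp
  have tri : ∑ x ∈ (range (2 * N)).sigma (fun n => range (n + 1)), g x.2 (x.1 - x.2) =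
      ∑ p ∈ (range (2 * N) ×ˢ range (2 * N)).filter (fun p => p.1 + p.2 < 2 * N),
        g p.1 p.2 := by
    refine Finset.sum_nbij' (fun x => (x.2, x.1 - x.2)) (fun p => ⟨p.1 + p.2, p.1⟩)
      ?_ ?_ ?_ ?_ ?_
    · intro x hx
      simp only [Finset.mem_sigma, Finset.mem_range] at hx
      simp only [Finset.mem_filter, Finset.mem_product, Finset.mem_range]
      omega
    · intro p hp
      simp only [Finset.mem_filter, Finset.mem_product, Finset.mem_range] at hp
      simp only [Finset.mem_sigma, Finset.mem_range]
      omega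
    · rintro ⟨n, m⟩ hx
      simp only [Finset.mem_sigma, Finset.mem_range] at hx
      have h1 : m + (n - m) = n := by omega
      simp only [h1]
    · rintro ⟨i, j⟩ hp
      simp only [Finset.mem_filter, Finset.mem_product, Finset.mem_range] at hp
      show ((i, i + j - i) : ℕ × ℕ) = (i, j)
      have hij : i + j - i = j := by omega
      rw [hij]
    · intro x hx
      rfl
  have final : ∑ p ∈ (range (2 * N) ×ˢ range (2 * N)).filter (fun p => p.1 + p.2 < 2 * N),
        g p.1 p.2 = ∑ p ∈ range N ×ˢ range N, g p.1 p.2 := by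
    refine (Finset.sum_subset ?_ ?_).symm
    · intro p hp
      simp only [Finset.mem_product, Finset.mem_range] at hp
      simp only [Finset.mem_filter, Finset.mem_product, Finset.mem_range]
      omega
    · intro p hp hnp
      simp only [Finset.mem_filter, Finset.mem_product, Finset.mem_range] at hp
      simp only [Finset.mem_product, Finset.mem_range] at hnp
      exact hgz p.1 p.2 (by omega)
  rw [lhs_eq, rhs_eq, tri, final]

variable (k : Type u) [Field k] (A : Type u) [Ring A] [Bialgebra k A]

/-- `ε ⊗ f : A ⊗ (A ⊗ A) → k`. -/
def epsF (f : A ⊗[k] A →ₗ[k] k) : A ⊗[k] (A ⊗[k] A) →ₗ[k] k :=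
  LinearMap.mul' k k ∘ₗ TensorProduct.map (Coalgebra.counit) f

/-- `f(id ⊗ m) : A ⊗ (A ⊗ A) → k`. -/
def fIdMul (f : A ⊗[k] A →ₗ[k] k) : A ⊗[k] (A ⊗[k] A) →ₗ[k] k :=
  f ∘ₗ TensorProduct.map LinearMap.id (LinearMap.mul' k A)

/-- `f ⊗ ε : A ⊗ (A ⊗ A) → k`. -/
def fEps (f : A ⊗[k] A →ₗ[k] k) : A ⊗[k] (A ⊗[k] A) →ₗ[k] k :=
  LinearMap.mul' k k ∘ₗ TensorProduct.map f (Coalgebra.counit) ∘ₗ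
    (TensorProduct.assoc k A A A).symm.toLinearMap

/-- `f(m ⊗ id) : A ⊗ (A ⊗ A) → k`. -/
def fMulId (f : A ⊗[k] A →ₗ[k] k) : A ⊗[k] (A ⊗[k] A) →ₗ[k] k :=
  f ∘ₗ TensorProduct.map (LinearMap.mul' k A) LinearMap.id ∘ₗ
    (TensorProduct.assoc k A A A).symm.toLinearMap

section Phis
open Coalgebra

/-- Multiplication of a bialgebra as a coalgebra morphism. -/
noncomputable def mulCoalgHom : (A ⊗[k] A) →ₗc[k] A where
  toLinearMap := LinearMap.mul' k A
  counit_comp := by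
    ext a b
    simp [Bialgebra.counit_mul, mul_comm]
  map_comp_comul := by
    ext a b
    have ra := Coalgebra.Repr.arbitrary k a
    have rb := Coalgebra.Repr.arbitrary k b
    show TensorProduct.map (LinearMap.mul' k A) (LinearMap.mul' k A)
        (Coalgebra.comul (a ⊗ₜ[k] b)) = Coalgebra.comul (LinearMap.mul' k A (a ⊗ₜ[k] b))
    rw [TensorProduct.comul_def]
    simp only [LinearMap.comp_apply, TensorProduct.map_tmul, LinearMap.mul'_apply,
      Bialgebra.comul_mul, TensorProduct.AlgebraTensorModule.map_tmul]
    rw [← ra.eq, ← rb.eq]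
    rw [Finset.sum_mul_sum]
    simp only [TensorProduct.sum_tmul, TensorProduct.tmul_sum, map_sum,
      TensorProduct.tensorTensorTensorComm_tmul, TensorProduct.map_tmul,
        TensorProduct.AlgebraTensorModule.tensorTensorTensorComm_tmul,
        TensorProduct.AlgebraTensorModule.map_tmul,
      LinearMap.mul'_apply, Algebra.TensorProduct.tmul_mul_tmul, LinearEquiv.coe_coe]
    rw [Finset.sum_comm]

/-- `a ⊗ x ↦ ε(a) • x` as a coalgebra morphism. -/
noncomputable def phi1 : (A ⊗[k] (A ⊗[k] A)) →ₗc[k] (A ⊗[k] A) :=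
  (Coalgebra.TensorProduct.lid k (A ⊗[k] A)).toCoalgHom.comp
    (Coalgebra.TensorProduct.map (Coalgebra.counitCoalgHom k A) (CoalgHom.id k (A ⊗[k] A)))

/-- `id ⊗ m` as a coalgebra morphism. -/
noncomputable def phi2 : (A ⊗[k] (A ⊗[k] A)) →ₗc[k] (A ⊗[k] A) :=
  Coalgebra.TensorProduct.map (CoalgHom.id k A) (mulCoalgHom k A)

/-- `a ⊗ (b ⊗ c) ↦ ε(c) • (a ⊗ b)` as a coalgebra morphism. -/
noncomputable def phi3 : (A ⊗[k] (A ⊗[k] A)) →ₗc[k] (A ⊗[k] A) :=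
  ((Coalgebra.TensorProduct.rid k k (A ⊗[k] A)).toCoalgHom.comp
    (Coalgebra.TensorProduct.map (CoalgHom.id k (A ⊗[k] A)) (Coalgebra.counitCoalgHom k A))).comp
      (Coalgebra.TensorProduct.assoc k k A A A).symm.toCoalgHom

/-- `(m ⊗ id) ∘ assoc⁻¹` as a coalgebra morphism. -/
noncomputable def phi4 : (A ⊗[k] (A ⊗[k] A)) →ₗc[k] (A ⊗[k] A) :=
  (Coalgebra.TensorProduct.map (mulCoalgHom k A) (CoalgHom.id k A)).comp
    (Coalgebra.TensorProduct.assoc k k A A A).symm.toCoalgHom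

lemma epsF_eq (f : A ⊗[k] A →ₗ[k] k) :
    epsF k A f = f ∘ₗ (phi1 k A : A ⊗[k] (A ⊗[k] A) →ₗ[k] A ⊗[k] A) := by
  ext a b c
  simp [epsF, phi1, Coalgebra.counitCoalgHom_apply, mul_comm]

lemma fIdMul_eq (f : A ⊗[k] A →ₗ[k] k) :
    fIdMul k A f = f ∘ₗ (phi2 k A : A ⊗[k] (A ⊗[k] A) →ₗ[k] A ⊗[k] A) := by
  ext a b c
  simp [fIdMul, phi2, mulCoalgHom]

lemma fEps_eq (f : A ⊗[k] A →ₗ[k] k) :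
    fEps k A f = f ∘ₗ (phi3 k A : A ⊗[k] (A ⊗[k] A) →ₗ[k] A ⊗[k] A) := by
  ext a b c
  simp [fEps, phi3, Coalgebra.counitCoalgHom_apply, mul_comm]

lemma fMulId_eq (f : A ⊗[k] A →ₗ[k] k) :
    fMulId k A f = f ∘ₗ (phi4 k A : A ⊗[k] (A ⊗[k] A) →ₗ[k] A ⊗[k] A) := by
  ext a b c
  simp [fMulId, phi4, mulCoalgHom]

end Phis

/-- Lemma 1.6 ([GM, Lemma 4.1]): if `η : A ⊗ A → k` is a Hochschild 2-cocycle such that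
`η(id ⊗ m)` commutes with `ε ⊗ η` and `η(m ⊗ id)` commutes with `η ⊗ ε` in the convolution
algebra `Hom(A^{⊗3}, k)`, and `η` is convolution nilpotent (so that `σ = e^η` is a
well-defined finite sum, convolution invertible with inverse `e^{-η}`), then `σ = e^η`
satisfies the multiplicative 2-cocycle condition
`(ε ⊗ σ) * σ(id ⊗ m) = (σ ⊗ ε) * σ(m ⊗ id)`. -/
theorem stmt5 [CharZero k] (η : A ⊗[k] A →ₗ[k] k)
    -- Hochschild 2-cocycle condition
    (hHoch : epsF k A η + fIdMul k A η = fEps k A η + fMulId k A η)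
    -- `η` vanishes when one argument is in the unit component
    (hunit : ∀ a : A, η (a ⊗ₜ[k] (1 : A)) = 0 ∧ η ((1 : A) ⊗ₜ[k] a) = 0)
    -- `η(id ⊗ m)` commutes with `ε ⊗ η`
    (hcomm1 : conv (epsF k A η) (fIdMul k A η) = conv (fIdMul k A η) (epsF k A η))
    -- `η(m ⊗ id)` commutes with `η ⊗ ε`
    (hcomm2 : conv (fEps k A η) (fMulId k A η) = conv (fMulId k A η) (fEps k A η))
    -- local nilpotency, making `e^η` a finite sum
    (N : ℕ) (hN : convPow η N = 0)
    -- `σ = e^η = Σ η^{*i}/i!`, a finite sum by nilpotency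
    (σ : A ⊗[k] A →ₗ[k] k)
    (hσ : σ = ∑ i ∈ Finset.range N, ((Nat.factorial i : k))⁻¹ • convPow η i) :
    conv (epsF k A σ) (fIdMul k A σ) = conv (fEps k A σ) (fMulId k A σ) := by
  set a := epsF k A η with ha'
  set b := fIdMul k A η with hb'
  set c := fEps k A η with hc'
  set d := fMulId k A η with hd'
  have hpow : ∀ (φ : (A ⊗[k] (A ⊗[k] A)) →ₗc[k] (A ⊗[k] A)),
      (η ∘ₗ (φ : A ⊗[k] (A ⊗[k] A) →ₗ[k] A ⊗[k] A)) ^ N = 0 := by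
    intro φ
    rw [← convPow_eq_pow, convPow_pull, hN, LinearMap.zero_comp]
  have hexp : ∀ (φ : (A ⊗[k] (A ⊗[k] A)) →ₗc[k] (A ⊗[k] A)),
      σ ∘ₗ (φ : A ⊗[k] (A ⊗[k] A) →ₗ[k] A ⊗[k] A) =
      ∑ i ∈ Finset.range N, ((Nat.factorial i : k))⁻¹ •
        (η ∘ₗ (φ : A ⊗[k] (A ⊗[k] A) →ₗ[k] A ⊗[k] A)) ^ i := by
    intro φ
    rw [hσ, exp_pull]
  have e1 : epsF k A σ = ∑ i ∈ Finset.range N, ((Nat.factorial i : k))⁻¹ • a ^ i := by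
    rw [epsF_eq, hexp, ha', epsF_eq]
  have e2 : fIdMul k A σ = ∑ i ∈ Finset.range N, ((Nat.factorial i : k))⁻¹ • b ^ i := by
    rw [fIdMul_eq, hexp, hb', fIdMul_eq]
  have e3 : fEps k A σ = ∑ i ∈ Finset.range N, ((Nat.factorial i : k))⁻¹ • c ^ i := by
    rw [fEps_eq, hexp, hc', fEps_eq]
  have e4 : fMulId k A σ = ∑ i ∈ Finset.range N, ((Nat.factorial i : k))⁻¹ • d ^ i := by
    rw [fMulId_eq, hexp, hd', fMulId_eq]
  rw [conv_eq_mul, conv_eq_mul, e1, e2, e3, e4]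
  have hab : Commute a b := by
    show a * b = b * a
    rw [← conv_eq_mul, ← conv_eq_mul]
    exact hcomm1
  have hcd : Commute c d := by
    show c * d = d * c
    rw [← conv_eq_mul, ← conv_eq_mul]
    exact hcomm2
  have haN : a ^ N = 0 := by rw [ha', epsF_eq]; exact hpow _
  have hbN : b ^ N = 0 := by rw [hb', fIdMul_eq]; exact hpow _
  have hcN : c ^ N = 0 := by rw [hc', fEps_eq]; exact hpow _
  have hdN : d ^ N = 0 := by rw [hd', fMulId_eq]; exact hpow _
  rw [expMulAux a b hab N haN hbN, expMulAux c d hcd N hcN hdN, hHoch]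

end Stmt5
end

section
/- Define χ : 𝒪₂ⁿ × 𝒪₂ⁿ → {±1} by χ(j, i) = 1 if i = (a,b) with a < b and j(a) < j(b), and χ(j, i) = −1 if j(a) > j(b). Then χ is a rack 2-cocycle on the rack 𝒪₂ⁿ of transpositions of S_n under conjugation: χ(i, j▷k) χ(j,k) = χ(i▷j, i▷k) χ(i,k) for all transpositions i, j, k. -/
lemma conj_swap' {n : ℕ} (σ : Equiv.Perm (Fin n)) (a b : Fin n) :
    σ * Equiv.swap a b * σ⁻¹ = Equiv.swap (σ a) (σ b) := by
  simp [Equiv.Perm.mul_def, Equiv.Perm.inv_def, ← Equiv.trans_assoc]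

/-- The function `χ` on pairs of transpositions of `S_n`, with `χ(j, (a,b)) = 1` if
`j(a) < j(b)` (for `a < b`) and `-1` otherwise, is a rack 2-cocycle on the rack of
transpositions under conjugation. -/
theorem stmt11 (n : ℕ) (hn : 3 ≤ n)
    (χ : Equiv.Perm (Fin n) → Equiv.Perm (Fin n) → ℤ)
    (hχ : ∀ (j : Equiv.Perm (Fin n)) (a b : Fin n), a < b →
      χ j (Equiv.swap a b) = if j a < j b then 1 else -1) :
    ∀ i j l : Equiv.Perm (Fin n), i.IsSwap → j.IsSwap → l.IsSwap →
      χ i (j * l * j⁻¹) * χ j l = χ (i * j * i⁻¹) (i * l * i⁻¹) * χ i l := by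
  have key : ∀ (σ : Equiv.Perm (Fin n)) (c d : Fin n), c ≠ d →
      χ σ (Equiv.swap c d) = if (c < d ↔ σ c < σ d) then 1 else -1 := by
    intro σ c d hcd
    have hne : σ c ≠ σ d := fun he => hcd (σ.injective he)
    rcases hcd.lt_or_gt with h | h
    · rw [hχ σ c d h]
      have : (c < d ↔ σ c < σ d) ↔ (σ c < σ d) := by tauto
      simp only [this]
    · rw [Equiv.swap_comm, hχ σ d c h]
      have h1 : ¬ c < d := h.asymm
      have : (c < d ↔ σ c < σ d) ↔ σ d < σ c := by
        constructor
        · intro hiff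
          have : ¬ σ c < σ d := fun hs => h1 (hiff.mpr hs)
          exact hne.lt_or_gt.resolve_left this
        · intro hl
          exact ⟨fun hc => absurd hc h1, fun hs => absurd hs hl.asymm⟩
      simp only [this]
  rintro i j l ⟨a, b, hab, rfl⟩ ⟨c, d, hcd, rfl⟩ ⟨e, f, hef, rfl⟩
  have hJe : Equiv.swap c d e ≠ Equiv.swap c d f :=
    fun h => hef ((Equiv.swap c d).injective h)
  have hIe : Equiv.swap a b e ≠ Equiv.swap a b f :=
    fun h => hef ((Equiv.swap a b).injective h)
  rw [conj_swap' (Equiv.swap c d) e f,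
    conj_swap' (Equiv.swap a b) e f,
    key _ _ _ hJe, key _ _ _ hef,
    key (Equiv.swap a b * Equiv.swap c d * (Equiv.swap a b)⁻¹) _ _ hIe,
    key _ _ _ hef]
  simp only [Equiv.Perm.mul_apply, Equiv.Perm.coe_inv, Equiv.symm_apply_apply]
  split_ifs <;> try norm_num
  all_goals tauto
end
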